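/- Let H be a real inner product space, let v_1, …, v_m ∈ H be orthonormal, let g_1, …, g_D ∈ H, and let w ∈ ℝ^m. Define u_k ∈ ℝ^m by u_k[j] = ⟨v_j, g_k⟩ for k = 1, …, D, and let P be the orthogonal projection of ℝ^m onto span{u_1, …, u_D}. Then inf_{β ∈ ℝ^D} ‖Σ_{j=1}^m w_j·v_j + Σ_{k=1}^D β_k·g_k‖² ≥ ‖w − P·w‖². -/

import Mathlib

noncomputable section

/-- for orthonormal `v_1, …, v_m` in a real inner product space `H`,
arbitrary `g_1, …, g_D ∈ H` and `w ∈ ℝ^m`, with `u_k = (⟨v_j, g_k⟩)_j ∈ ℝ^m` and `P`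
the (Euclidean) orthogonal projection onto `span{u_1, …, u_D}`, we have
`inf_β ‖Σ_j w_j v_j + Σ_k β_k g_k‖² ≥ ‖w - P w‖²`. -/
theorem stmt10 {H : Type*} [NormedAddCommGroup H] [InnerProductSpace ℝ H]
    (m D : ℕ) (v : Fin m → H) (hv : Orthonormal ℝ v) (g : Fin D → H)
    (w : EuclideanSpace ℝ (Fin m)) (u : Fin D → EuclideanSpace ℝ (Fin m))
    (hu : ∀ k j, u k j = (inner ℝ (v j) (g k) : ℝ)) :
    ‖w - (Submodule.orthogonalProjection (Submodule.span ℝ (Set.range u)) w :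
        EuclideanSpace ℝ (Fin m))‖ ^ 2
      ≤ ⨅ β : Fin D → ℝ, ‖(∑ j, w j • v j) + ∑ k, β k • g k‖ ^ 2 := by
  apply le_ciInf
  intro β
  set x : H := (∑ j, w j • v j) + ∑ k, β k • g k with hx
  set c : EuclideanSpace ℝ (Fin m) := w + ∑ k, β k • u k with hc
  have hcj : ∀ j, c j = (inner ℝ (v j) x : ℝ) := by
    intro j
    have h1 : (inner ℝ (v j) (∑ i, w i • v i) : ℝ) = w j := hv.inner_right_fintype w j
    have h2 : (inner ℝ (v j) (∑ k, β k • g k) : ℝ) = ∑ k, β k * u k j := by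
      rw [inner_sum]
      refine Finset.sum_congr rfl fun k _ => ?_
      rw [inner_smul_right, hu]
    simp only [hc, hx, inner_add_right, h1, h2]
    calc w j + (∑ k, β k • u k) j = w j + ∑ k, (β k • u k) j := by
          congr 1
          rw [WithLp.ofLp_sum]
          exact Finset.sum_apply j Finset.univ _
      _ = w j + ∑ k, β k * u k j := by simp [PiLp.smul_apply, smul_eq_mul]
  -- ‖c‖^2 ≤ ‖x‖^2 by Bessel
  have bessel : ‖c‖ ^ 2 ≤ ‖x‖ ^ 2 := by
    have := hv.sum_inner_products_le (s := Finset.univ) x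
    calc ‖c‖ ^ 2 = ∑ j, ‖c j‖ ^ 2 := by
          rw [EuclideanSpace.norm_eq]
          rw [Real.sq_sqrt (by positivity)]
      _ = ∑ j, ‖(inner ℝ (v j) x : ℝ)‖ ^ 2 := by
          refine Finset.sum_congr rfl fun j _ => by rw [hcj]
      _ ≤ ‖x‖ ^ 2 := this
  -- ‖w - P w‖ ≤ ‖c‖
  have hmem : (-∑ k, β k • u k) ∈ Submodule.span ℝ (Set.range u) := by
    apply neg_mem
    exact Submodule.sum_mem _ fun k _ =>
      Submodule.smul_mem _ _ (Submodule.subset_span ⟨k, rfl⟩)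
  have hproj : ‖w - (Submodule.orthogonalProjection (Submodule.span ℝ (Set.range u)) w :
      EuclideanSpace ℝ (Fin m))‖ ≤ ‖c‖ := by
    have hmin := Submodule.starProjection_minimal (U := Submodule.span ℝ (Set.range u)) w
    rw [Submodule.starProjection_apply] at hmin
    rw [hmin]
    calc (⨅ y : Submodule.span ℝ (Set.range u), ‖w - (y : EuclideanSpace ℝ (Fin m))‖)
        ≤ ‖w - ((⟨-∑ k, β k • u k, hmem⟩ : Submodule.span ℝ (Set.range u)) :
            EuclideanSpace ℝ (Fin m))‖ :=
          ciInf_le ⟨0, fun r ⟨y, hy⟩ => hy ▸ norm_nonneg _⟩ _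
      _ = ‖c‖ := by simp [hc, sub_neg_eq_add]
  exact le_trans (pow_le_pow_left₀ (norm_nonneg _) hproj 2) bessel
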